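/- arXiv:1107.6021 — 10 statements merged into one kernel-verified Lean document; each statement's English description precedes it below -/
import Mathlib

section
/- Let A be an associative algebra. Then the map R defined on the direct sum Â = A ⊕ A (with second copy written a′) by R(a′) = λ·a and R(a) = −λ·a, where Â carries the product a∘b = a≺b + a≻b + a·b, a∘b′ = (a≻b)′, a′∘b = (a≺b)′, a′∘b′ = (a·b)′ for a dendriform trialgebra structure (≺, ≻, ·) on A, is a Rota–Baxter operator of weight λ on Â, i.e., R(x)∘R(y) = R(x∘R(y) + R(x)∘y + λ x∘y) for all x, y ∈ Â. -/
/-- For a dendriform-trialgebra-type doubling product on Â = A ⊕ A,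
the map R(a') = λa, R(a) = -λa is a Rota–Baxter operator of weight λ.
An element (a, b) of A × A represents a + b'. -/
theorem stmt0 {K A : Type*} [Field K] [AddCommGroup A] [Module K A]
    (p s d : A →ₗ[K] A →ₗ[K] A) (lam : K)
    (mul : A × A → A × A → A × A)
    (hmul : ∀ x y : A × A,
      mul x y = (p x.1 y.1 + s x.1 y.1 + d x.1 y.1,
                 s x.1 y.2 + p x.2 y.1 + d x.2 y.2))
    (R : A × A → A × A)
    (hR : ∀ x : A × A, R x = (lam • x.2 - lam • x.1, 0)) :
    ∀ x y : A × A,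
      mul (R x) (R y) = R (mul x (R y) + mul (R x) y + lam • mul x y) := by
  intro x y
  simp only [hmul, hR, Prod.mk.injEq, Prod.fst_add, Prod.snd_add, Prod.smul_fst, Prod.smul_snd,
    map_add, map_sub, map_smul, LinearMap.add_apply, LinearMap.sub_apply, LinearMap.smul_apply,
    smul_add, smul_sub, map_zero, LinearMap.zero_apply, smul_zero]
  constructor
  · abel
  · abel
end

section
/- Let A be a vector space with two bilinear operations ≺, ≻. On Â = A ⊕ A′ define the product a∘b = a≺b + a≻b, a∘b′ = (a≻b)′, a′∘b = (a≺b)′, a′∘b′ = 0. Then the linear map R defined by R(a′) = a, R(a) = 0 is a Rota–Baxter operator of weight 0 on Â, i.e., R(x)∘R(y) = R(x∘R(y) + R(x)∘y) for all x, y ∈ Â. -/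
/-- For the dendriform-dialgebra-type doubling product on Â = A ⊕ A',
R(a') = a, R(a) = 0 is a Rota–Baxter operator of weight 0.
An element (a, b) of A × A represents a + b'. -/
theorem stmt1 {K A : Type*} [Field K] [AddCommGroup A] [Module K A]
    (p s : A →ₗ[K] A →ₗ[K] A)
    (mul : A × A → A × A → A × A)
    (hmul : ∀ x y : A × A,
      mul x y = (p x.1 y.1 + s x.1 y.1, s x.1 y.2 + p x.2 y.1))
    (R : A × A → A × A)
    (hR : ∀ x : A × A, R x = (x.2, 0)) :
    ∀ x y : A × A, mul (R x) (R y) = R (mul x (R y) + mul (R x) y) := by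
  intro x y; simp [hmul, hR]
end

section
/- Let B be an associative algebra over a field, and let R be a Rota–Baxter operator of weight λ ≠ 0 on B. Then B equipped with x≻y = (1/λ)R(x)y, x≺y = (1/λ)xR(y), x·y = xy is a dendriform trialgebra, i.e., satisfies all seven Loday–Ronco dendriform trialgebra identities. -/
/-- An associative algebra with a Rota–Baxter operator of weight λ ≠ 0
becomes a dendriform trialgebra via x≻y = (1/λ)R(x)y, x≺y = (1/λ)xR(y), x·y = xy. -/
theorem stmt3 {K B : Type*} [Field K] [NonUnitalRing B] [Module K B]
    [SMulCommClass K B B] [IsScalarTower K B B]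
    (R : B →ₗ[K] B) (lam : K) (hlam : lam ≠ 0)
    (hRB : ∀ x y : B, R x * R y = R (x * R y + R x * y + lam • (x * y)))
    (p s d : B → B → B)
    (hp : ∀ x y, p x y = lam⁻¹ • (x * R y))
    (hs : ∀ x y, s x y = lam⁻¹ • (R x * y))
    (hd : ∀ x y, d x y = x * y) :
    ∀ x y z : B,
      p (p x y) z = p x (p y z + s y z + d y z) ∧
      p (s x y) z = s x (p y z) ∧
      s (p x y + s x y + d x y) z = s x (s y z) ∧
      d (s x y) z = s x (d y z) ∧
      d (p x y) z = d x (s y z) ∧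
      p (d x y) z = d x (p y z) ∧
      d (d x y) z = d x (d y z) := by
  intro x y z
  have key : ∀ a b : B, R a * R b = R (a * R b) + R (R a * b) + lam • R (a * b) := by
    intro a b; rw [hRB]; simp [map_add, map_smul]
  have keyL : ∀ a b c : B, a * R b * R c =
      a * R (b * R c) + a * R (R b * c) + lam • (a * R (b * c)) := by
    intro a b c
    rw [mul_assoc, key, mul_add, mul_add, mul_smul_comm]
  refine ⟨?_, ?_, ?_, ?_, ?_, ?_, ?_⟩ <;>
    simp only [hp, hs, hd, map_add, map_smul, smul_add, smul_mul_assoc, mul_smul_comm,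
      smul_smul, mul_add, add_mul, ← mul_assoc] <;>
    simp only [keyL, key, mul_add, add_mul, smul_add, mul_smul_comm, smul_mul_assoc,
      smul_smul, ← mul_assoc] <;>
    match_scalars <;>
    field_simp
end

section
/- Let A be a vector space with three bilinear operations ≺, ≻, ·. Define Â = A ⊕ A′ with product a∘b = a≺b + a≻b + a·b, a∘b′ = (a≻b)′, a′∘b = (a≺b)′, a′∘b′ = (a·b)′. Then Â is an associative algebra if and only if (A, ≺, ≻, ·) is a dendriform trialgebra (satisfies the seven Loday–Ronco identities). -/
/-- The doubling Â = A ⊕ A' of (A, ≺, ≻, ·) is associative iff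
(A, ≺, ≻, ·) is a dendriform trialgebra (the seven Loday–Ronco identities).
An element (a, b) of A × A represents a + b'. -/
theorem stmt4 {K A : Type*} [Field K] [AddCommGroup A] [Module K A]
    (p s d : A →ₗ[K] A →ₗ[K] A)
    (mul : A × A → A × A → A × A)
    (hmul : ∀ x y : A × A,
      mul x y = (p x.1 y.1 + s x.1 y.1 + d x.1 y.1,
                 s x.1 y.2 + p x.2 y.1 + d x.2 y.2)) :
    (∀ x y z : A × A, mul (mul x y) z = mul x (mul y z)) ↔
    (∀ x y z : A,
      p (p x y) z = p x (p y z + s y z + d y z) ∧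
      p (s x y) z = s x (p y z) ∧
      s (p x y + s x y + d x y) z = s x (s y z) ∧
      d (s x y) z = s x (d y z) ∧
      d (p x y) z = d x (s y z) ∧
      p (d x y) z = d x (p y z) ∧
      d (d x y) z = d x (d y z)) := by
  constructor
  · intro h x y z
    refine ⟨?_, ?_, ?_, ?_, ?_, ?_, ?_⟩
    · have := congrArg Prod.snd (h (0, x) (y, 0) (z, 0))
      simpa [hmul] using this
    · have := congrArg Prod.snd (h (x, 0) (0, y) (z, 0))
      simpa [hmul] using this
    · have := congrArg Prod.snd (h (x, 0) (y, 0) (0, z))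
      simpa [hmul] using this
    · have := congrArg Prod.snd (h (x, 0) (0, y) (0, z))
      simpa [hmul] using this
    · have := congrArg Prod.snd (h (0, x) (y, 0) (0, z))
      simpa [hmul] using this
    · have := congrArg Prod.snd (h (0, x) (0, y) (z, 0))
      simpa [hmul] using this
    · have := congrArg Prod.snd (h (0, x) (0, y) (0, z))
      simpa [hmul] using this
  · intro h x y z
    obtain ⟨x1, x2⟩ := x
    obtain ⟨y1, y2⟩ := y
    obtain ⟨z1, z2⟩ := z
    have h1 := fun a b c => (h a b c).1
    have h2 := fun a b c => (h a b c).2.1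
    have h3 := fun a b c => (h a b c).2.2.1
    have h4 := fun a b c => (h a b c).2.2.2.1
    have h5 := fun a b c => (h a b c).2.2.2.2.1
    have h6 := fun a b c => (h a b c).2.2.2.2.2.1
    have h7 := fun a b c => (h a b c).2.2.2.2.2.2
    simp only [hmul, Prod.mk.injEq, map_add, LinearMap.add_apply]
    constructor
    · rw [h1, h2, h6]
      have := h3 x1 y1 z1
      simp only [map_add, LinearMap.add_apply] at this h4 h5 h7 ⊢
      rw [h4, h5, h7]
      linear_combination (norm := abel) this
    · rw [h2, h1, h6, h4, h5, h7]
      have H3 := h3 x1 y1 z2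
      simp only [map_add, LinearMap.add_apply] at H3 ⊢
      linear_combination (norm := abel) H3
end

section
/- Let A be a vector space with two bilinear operations ≺, ≻. Define Â = A ⊕ A′ with product a∘b = a≺b + a≻b, a∘b′ = (a≻b)′, a′∘b = (a≺b)′, a′∘b′ = 0. Then Â is an associative algebra if and only if (A, ≺, ≻) is a dendriform dialgebra. -/
/-- The doubling Â = A ⊕ A' of (A, ≺, ≻) (with a'∘b' = 0) is
associative iff (A, ≺, ≻) is a dendriform dialgebra. -/
theorem stmt5 {K A : Type*} [Field K] [AddCommGroup A] [Module K A]
    (p s : A →ₗ[K] A →ₗ[K] A)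
    (mul : A × A → A × A → A × A)
    (hmul : ∀ x y : A × A,
      mul x y = (p x.1 y.1 + s x.1 y.1, s x.1 y.2 + p x.2 y.1)) :
    (∀ x y z : A × A, mul (mul x y) z = mul x (mul y z)) ↔
    (∀ x y z : A,
      p (p x y) z = p x (p y z + s y z) ∧
      p (s x y) z = s x (p y z) ∧
      s (p x y + s x y) z = s x (s y z)) := by
  constructor
  · intro h x y z
    refine ⟨?_, ?_, ?_⟩
    · have := congrArg Prod.snd (h (0, x) (y, 0) (z, 0))
      simpa [hmul, map_add] using this
    · have := congrArg Prod.snd (h (x, 0) (0, y) (z, 0))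
      simpa [hmul, map_add] using this
    · have := congrArg Prod.snd (h (x, 0) (y, 0) (0, z))
      simpa [hmul, map_add] using this
  · intro h x y z
    have h1 : ∀ a b c : A, p (p a b) c = p a (p b c) + p a (s b c) := by
      intro a b c; have := (h a b c).1; simpa [map_add] using this
    have h2 : ∀ a b c : A, p (s a b) c = s a (p b c) := fun a b c => (h a b c).2.1
    have h3 : ∀ a b c : A, s (p a b) c = s a (s b c) - s (s a b) c := by
      intro a b c
      have := (h a b c).2.2
      simp only [map_add, LinearMap.add_apply] at this
      exact eq_sub_of_add_eq this
    simp only [hmul]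
    ext
    · simp only [map_add, LinearMap.add_apply, h1, h2, h3]
      abel
    · simp only [map_add, LinearMap.add_apply, h1, h2, h3]
      abel
end

section
/- Every dendriform trialgebra A over a field embeds into an associative algebra B carrying a Rota–Baxter operator R of weight 1, via an injective linear map ι: A → B such that ι(a≻b) = R(ι(a))ι(b), ι(a≺b) = ι(a)R(ι(b)), and ι(a·b) = ι(a)ι(b). Concretely one may take B = Â = A ⊕ A′ with the trialgebra doubling product, R(a′) = a, R(a) = −a, and ι(a) = a′. -/
/-- Every dendriform trialgebra (A, ≺, ≻, ·) embeds into an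
associative algebra with a Rota–Baxter operator of weight 1: take Â = A ⊕ A'
with the doubling product, R(a') = a, R(a) = -a, ι(a) = a'.
An element (a, b) of A × A represents a + b'. -/
theorem stmt6 {K A : Type*} [Field K] [AddCommGroup A] [Module K A]
    (p s d : A →ₗ[K] A →ₗ[K] A)
    (h1 : ∀ x y z : A, p (p x y) z = p x (p y z + s y z + d y z))
    (h2 : ∀ x y z : A, p (s x y) z = s x (p y z))
    (h3 : ∀ x y z : A, s (p x y + s x y + d x y) z = s x (s y z))
    (h4 : ∀ x y z : A, d (s x y) z = s x (d y z))
    (h5 : ∀ x y z : A, d (p x y) z = d x (s y z))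
    (h6 : ∀ x y z : A, p (d x y) z = d x (p y z))
    (h7 : ∀ x y z : A, d (d x y) z = d x (d y z))
    (mul : A × A → A × A → A × A)
    (hmul : ∀ x y : A × A,
      mul x y = (p x.1 y.1 + s x.1 y.1 + d x.1 y.1,
                 s x.1 y.2 + p x.2 y.1 + d x.2 y.2))
    (R : A × A → A × A)
    (hR : ∀ x : A × A, R x = (x.2 - x.1, 0))
    (iota : A → A × A)
    (hiota : ∀ a : A, iota a = (0, a)) :
    (∀ x y z : A × A, mul (mul x y) z = mul x (mul y z)) ∧
    (∀ x y : A × A, mul (R x) (R y) = R (mul x (R y) + mul (R x) y + mul x y)) ∧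
    Function.Injective iota ∧ IsLinearMap K iota ∧
    (∀ a b : A, iota (s a b) = mul (R (iota a)) (iota b)) ∧
    (∀ a b : A, iota (p a b) = mul (iota a) (R (iota b))) ∧
    (∀ a b : A, iota (d a b) = mul (iota a) (iota b)) := by
  have h3' : ∀ x y z : A, s x (s y z) = s (p x y) z + s (s x y) z + s (d x y) z := by
    intro x y z
    rw [← h3]
    simp [map_add, LinearMap.add_apply]
  refine ⟨?_, ?_, ?_, ?_, ?_, ?_, ?_⟩
  · intro x y z
    simp only [hmul, Prod.mk.injEq, map_add, LinearMap.add_apply]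
    constructor
    · rw [h1, h2, h6, h5, h4, h7, h3' x.1 y.1 z.1]
      simp only [map_add, LinearMap.add_apply]
      abel
    · rw [h1, h2, h6, h5, h4, h7, h3' x.1 y.1 z.2]
      simp only [map_add, LinearMap.add_apply]
      abel
  · intro x y
    simp only [hmul, hR, Prod.mk.injEq, map_add, map_sub, map_zero,
      LinearMap.add_apply, LinearMap.sub_apply, LinearMap.zero_apply,
      Prod.fst_add, Prod.snd_add]
    constructor
    · abel
    · abel
  · intro a b hab
    have := congrArg Prod.snd hab
    simpa [hiota] using this
  · constructor
    · intro a b; simp [hiota, Prod.ext_iff]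
    · intro c a; simp [hiota, Prod.ext_iff]
  · intro a b
    simp [hiota, hR, hmul]
  · intro a b
    simp [hiota, hR, hmul]
  · intro a b
    simp [hiota, hR, hmul]
end

section
/- Every dendriform dialgebra A embeds into an associative algebra B carrying a Rota–Baxter operator R of weight 0, via an injective linear map ι: A → B with ι(a≻b) = R(ι(a))ι(b) and ι(a≺b) = ι(a)R(ι(b)). Concretely, B = A ⊕ A′ with product a∘b = a≺b + a≻b, a∘b′ = (a≻b)′, a′∘b = (a≺b)′, a′∘b′ = 0, R(a′) = a, R(a) = 0, and ι(a) = a′. -/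
/-- Every dendriform dialgebra (A, ≺, ≻) embeds into an associative
algebra with a Rota–Baxter operator of weight 0: take Â = A ⊕ A' with the
doubling product (a'∘b' = 0), R(a') = a, R(a) = 0, ι(a) = a'. -/
theorem stmt7 {K A : Type*} [Field K] [AddCommGroup A] [Module K A]
    (p s : A →ₗ[K] A →ₗ[K] A)
    (h1 : ∀ x y z : A, p (p x y) z = p x (p y z + s y z))
    (h2 : ∀ x y z : A, p (s x y) z = s x (p y z))
    (h3 : ∀ x y z : A, s (p x y + s x y) z = s x (s y z))
    (mul : A × A → A × A → A × A)
    (hmul : ∀ x y : A × A,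
      mul x y = (p x.1 y.1 + s x.1 y.1, s x.1 y.2 + p x.2 y.1))
    (R : A × A → A × A)
    (hR : ∀ x : A × A, R x = (x.2, 0))
    (iota : A → A × A)
    (hiota : ∀ a : A, iota a = (0, a)) :
    (∀ x y z : A × A, mul (mul x y) z = mul x (mul y z)) ∧
    (∀ x y : A × A, mul (R x) (R y) = R (mul x (R y) + mul (R x) y)) ∧
    Function.Injective iota ∧ IsLinearMap K iota ∧
    (∀ a b : A, iota (s a b) = mul (R (iota a)) (iota b)) ∧
    (∀ a b : A, iota (p a b) = mul (iota a) (R (iota b))) := by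
  refine ⟨?_, ?_, ?_, ?_, ?_, ?_⟩
  · intro x y z
    simp only [hmul, Prod.ext_iff, map_add, LinearMap.add_apply]
    constructor
    · have := h3 x.1 y.1 z.1
      simp only [map_add, LinearMap.add_apply] at this h1 h2 ⊢
      rw [h1, h2, ← this]
      abel
    · have := h3 x.1 y.1 z.2
      simp only [map_add, LinearMap.add_apply] at this h1 h2 ⊢
      rw [h1, h2, ← this]
      abel
  · intro x y
    simp [hmul, hR, Prod.ext_iff]
  · intro a b hab
    simpa [hiota, Prod.ext_iff] using hab
  · constructor
    · intro a b; simp [hiota, Prod.ext_iff]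
    · intro c a; simp [hiota, Prod.ext_iff]
  · intro a b; simp [hmul, hR, hiota, Prod.ext_iff]
  · intro a b; simp [hmul, hR, hiota, Prod.ext_iff]
end

section
/- Let A be an associative algebra with a derivation d satisfying d² = 0. Then A with the operations x⊢y = d(x)y, x⊣y = xd(y), x⊥y = xy is a skew-triassociative algebra: ⊢, ⊣, ⊥ are each associative (in the dialgebra sense: x⊣(y⊣z) = (x⊣y)⊣z, x⊢(y⊢z) = (x⊢y)⊢z, (x⊥y)⊥z = x⊥(y⊥z)), and the identities (x⊣y)⊢z = (x⊢y)⊢z, x⊣(y⊢z) = x⊣(y⊣z), x⊢(y⊣z) = (x⊢y)⊣z hold, together with the mixed identities of skew trialgebras obtained from associativity with emphasized variables: e.g. x⊥(y⊢z) = (x⊣y)⊥z, x⊢(y⊥z) = (x⊢y)⊥z, (x⊥y)⊣z = x⊥(y⊣z). -/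
/-- An associative algebra with a derivation d satisfying d² = 0
becomes a skew-triassociative algebra via x⊢y = d(x)y, x⊣y = xd(y), x⊥y = xy. -/
theorem stmt9 {A : Type*} [NonUnitalRing A]
    (d : A → A)
    (hadd : ∀ x y : A, d (x + y) = d x + d y)
    (hder : ∀ x y : A, d (x * y) = d x * y + x * d y)
    (hsq : ∀ x : A, d (d x) = 0)
    (l r m : A → A → A)
    (hl : ∀ x y, l x y = d x * y)
    (hr : ∀ x y, r x y = x * d y)
    (hm : ∀ x y, m x y = x * y) :
    ∀ x y z : A,
      r x (r y z) = r (r x y) z ∧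
      l x (l y z) = l (l x y) z ∧
      m (m x y) z = m x (m y z) ∧
      l (r x y) z = l (l x y) z ∧
      r x (l y z) = r x (r y z) ∧
      l x (r y z) = r (l x y) z ∧
      m x (l y z) = m (r x y) z ∧
      l x (m y z) = m (l x y) z ∧
      r (m x y) z = m x (r y z) := by
  intro x y z
  refine ⟨?_, ?_, ?_, ?_, ?_, ?_, ?_, ?_, ?_⟩ <;>
    simp [hl, hr, hm, hder, hsq, mul_assoc, mul_add, add_mul]
end

section
/- Let A be a triassociative algebra, let Ā = A/A₀ where A₀ = span{a⊢b − a⊣b, a⊢b − a⊥b}, and form Â = Ā ⊕ A with operations ā∘x = a⊢x, x∘ā = x⊣a, ā∘b̄ = (a⊢b)‾, x∘y = x⊥y for ā, b̄ ∈ Ā and x, y ∈ A. Then these operations are well-defined and Â is an associative algebra. -/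
/-- For a triassociative algebra A, with A₀ = span{a⊢b − a⊣b,
a⊢b − a⊥b} and Ā = A/A₀, the product on Â = Ā ⊕ A given by
(ā, x)∘(b̄, y) = ((a⊢b)‾, a⊢y + x⊣b + x⊥y) is well defined and associative. -/
theorem stmt12 {K A : Type*} [Field K] [AddCommGroup A] [Module K A]
    (l r m : A →ₗ[K] A →ₗ[K] A)
    (hl : ∀ x y z : A, l x (l y z) = l (l x y) z)
    (hr : ∀ x y z : A, r x (r y z) = r (r x y) z)
    (hm : ∀ x y z : A, m x (m y z) = m (m x y) z)
    (h1 : ∀ x y z : A, l (r x y) z = l (l x y) z)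
    (h2 : ∀ x y z : A, l (m x y) z = l (l x y) z)
    (h3 : ∀ x y z : A, r x (l y z) = r x (r y z))
    (h4 : ∀ x y z : A, r x (m y z) = r x (r y z))
    (h5 : ∀ x y z : A, r (l x y) z = l x (r y z))
    (h6 : ∀ x y z : A, m (r x y) z = m x (l y z))
    (h7 : ∀ x y z : A, l x (m y z) = m (l x y) z)
    (h8 : ∀ x y z : A, r (m x y) z = m x (r y z))
    (A₀ : Submodule K A)
    (hA₀ : A₀ = Submodule.span K
      {v | ∃ a b : A, v = l a b - r a b ∨ v = l a b - m a b}) :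
    ∃ mul : ((A ⧸ A₀) × A) → ((A ⧸ A₀) × A) → ((A ⧸ A₀) × A),
      (∀ a b x y : A,
        mul (Submodule.Quotient.mk a, x) (Submodule.Quotient.mk b, y)
          = (Submodule.Quotient.mk (l a b), l a y + r x b + m x y)) ∧
      (∀ u v w : (A ⧸ A₀) × A, mul (mul u v) w = mul u (mul v w)) := by
  -- l kills A₀ on the left
  have hl0 : A₀ ≤ LinearMap.ker l := by
    rw [hA₀, Submodule.span_le]
    rintro v ⟨a, b, h | h⟩ <;> subst h <;>
      simp only [SetLike.mem_coe, LinearMap.mem_ker] <;> ext z <;>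
      simp [h1, h2, sub_eq_zero]
  -- r (in its second argument) kills A₀
  have hr0 : A₀ ≤ LinearMap.ker r.flip := by
    rw [hA₀, Submodule.span_le]
    rintro v ⟨a, b, h | h⟩ <;> subst h <;>
      simp only [SetLike.mem_coe, LinearMap.mem_ker] <;> ext z <;>
      simp [LinearMap.flip_apply, h3, h4, sub_eq_zero]
  -- l a maps A₀ into A₀
  have key : ∀ a : A, A₀ ≤ Submodule.comap (l a) A₀ := by
    intro a
    rw [hA₀, Submodule.span_le]
    rintro v ⟨c, d, h | h⟩ <;> subst h <;>
      simp only [SetLike.mem_coe, Submodule.mem_comap, map_sub]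
    · have heq : l a (l c d) - l a (r c d) =
          (l a (l c d) - r a (l c d)) - (l a (r c d) - r a (r c d)) := by
        rw [h3]; abel
      rw [heq]
      exact sub_mem (Submodule.subset_span ⟨a, l c d, Or.inl rfl⟩)
        (Submodule.subset_span ⟨a, r c d, Or.inl rfl⟩)
    · have heq : l a (l c d) - l a (m c d) =
          (l a (l c d) - r a (l c d)) - (l a (m c d) - r a (m c d)) := by
        rw [h3, h4]; abel
      rw [heq]
      exact sub_mem (Submodule.subset_span ⟨a, l c d, Or.inl rfl⟩)
        (Submodule.subset_span ⟨a, m c d, Or.inl rfl⟩)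
  -- lifted maps
  set lq : (A ⧸ A₀) →ₗ[K] A →ₗ[K] A := A₀.liftQ l hl0 with hlq
  set rq : (A ⧸ A₀) →ₗ[K] A →ₗ[K] A := A₀.liftQ r.flip hr0 with hrq
  set f : A →ₗ[K] A →ₗ[K] (A ⧸ A₀) := l.compr₂ A₀.mkQ with hfdef
  have hf1 : A₀ ≤ LinearMap.ker f := by
    intro v hv
    simp only [LinearMap.mem_ker]
    ext b
    have : l v = 0 := hl0 hv
    simp [hfdef, LinearMap.compr₂_apply, this]
  set f1 : (A ⧸ A₀) →ₗ[K] A →ₗ[K] (A ⧸ A₀) := A₀.liftQ f hf1 with hf1def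
  have hf2 : A₀ ≤ LinearMap.ker f1.flip := by
    intro v hv
    simp only [LinearMap.mem_ker]
    refine LinearMap.ext fun p => ?_
    obtain ⟨a, rfl⟩ := Submodule.Quotient.mk_surjective A₀ p
    have : f1 (Submodule.Quotient.mk a) v = Submodule.Quotient.mk (l a v) := by
      simp [hf1def, Submodule.liftQ_apply, hfdef]
    simp only [LinearMap.flip_apply, LinearMap.zero_apply, this]
    rw [Submodule.Quotient.mk_eq_zero]
    exact key a hv
  set f2 : (A ⧸ A₀) →ₗ[K] (A ⧸ A₀) →ₗ[K] (A ⧸ A₀) := A₀.liftQ f1.flip hf2 with hf2def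
  refine ⟨fun u v => (f2 v.1 u.1, lq u.1 v.2 + rq v.1 u.2 + m u.2 v.2), ?_, ?_⟩
  · intro a b x y
    simp [hf2def, hf1def, hfdef, hlq, hrq, Submodule.liftQ_apply]
  · rintro ⟨p, x⟩ ⟨q, y⟩ ⟨s, z⟩
    obtain ⟨a, rfl⟩ := Submodule.Quotient.mk_surjective A₀ p
    obtain ⟨b, rfl⟩ := Submodule.Quotient.mk_surjective A₀ q
    obtain ⟨c, rfl⟩ := Submodule.Quotient.mk_surjective A₀ s
    simp only [hf2def, hf1def, hfdef, hlq, hrq, Submodule.liftQ_apply,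
      LinearMap.flip_apply, LinearMap.compr₂_apply, Submodule.mkQ_apply,
      map_add, LinearMap.add_apply]
    refine Prod.ext ?_ ?_
    · simp only []
      congr 1
      exact (hl a b c).symm
    · simp only []
      rw [hl, ← h5, h3, hr, ← h8, h7, ← h6, hm]
      abel
end

section
/- Let A be a diassociative algebra (associative dialgebra). Then A₀ = span{a⊢b − a⊣b : a, b ∈ A} is an ideal of A, and with Ā = A/A₀ and Â = Ā ⊕ A equipped with ā∘x = a⊢x, x∘ā = x⊣a, ā∘b̄ = (a⊢b)‾, x∘y = 0, the algebra Â is associative. -/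
/-- For a diassociative algebra A, A₀ = span{a⊢b − a⊣b} is an
ideal, and Â = Ā ⊕ A with (ā, x)∘(b̄, y) = ((a⊢b)‾, a⊢y + x⊣b) is associative. -/
theorem stmt13 {K A : Type*} [Field K] [AddCommGroup A] [Module K A]
    (l r : A →ₗ[K] A →ₗ[K] A)
    (hr : ∀ x y z : A, r x (r y z) = r (r x y) z)
    (h2 : ∀ x y z : A, l x (r y z) = r (l x y) z)
    (hl : ∀ x y z : A, l x (l y z) = l (l x y) z)
    (h4 : ∀ x y z : A, l (r x y) z = l (l x y) z)
    (h5 : ∀ x y z : A, r x (l y z) = r x (r y z))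
    (A₀ : Submodule K A)
    (hA₀ : A₀ = Submodule.span K {v | ∃ a b : A, v = l a b - r a b}) :
    (∀ a : A, ∀ x ∈ A₀, l a x ∈ A₀ ∧ l x a ∈ A₀ ∧ r a x ∈ A₀ ∧ r x a ∈ A₀) ∧
    (∃ mul : ((A ⧸ A₀) × A) → ((A ⧸ A₀) × A) → ((A ⧸ A₀) × A),
      (∀ a b x y : A,
        mul (Submodule.Quotient.mk a, x) (Submodule.Quotient.mk b, y)
          = (Submodule.Quotient.mk (l a b), l a y + r x b)) ∧
      (∀ u v w : (A ⧸ A₀) × A, mul (mul u v) w = mul u (mul v w))) := by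
  -- vanishing lemmas
  have hlker : ∀ v ∈ A₀, l v = 0 := by
    intro v hv
    rw [hA₀] at hv
    have : Submodule.span K {v | ∃ a b : A, v = l a b - r a b} ≤ LinearMap.ker l := by
      rw [Submodule.span_le]
      rintro w ⟨a, b, rfl⟩
      simp only [SetLike.mem_coe, LinearMap.mem_ker, map_sub]
      ext z
      simp [h4]
    simpa using this hv
  have hrker : ∀ v ∈ A₀, ∀ x, r x v = 0 := by
    intro v hv
    rw [hA₀] at hv
    have : Submodule.span K {v | ∃ a b : A, v = l a b - r a b} ≤ LinearMap.ker r.flip := by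
      rw [Submodule.span_le]
      rintro w ⟨a, b, rfl⟩
      simp only [SetLike.mem_coe, LinearMap.mem_ker, map_sub]
      ext x
      simp [h5]
    intro x
    have h0 := this hv
    rw [LinearMap.mem_ker] at h0
    have := congrArg (fun f => f x) h0
    simpa using this
  have hmul_l : ∀ a : A, ∀ x ∈ A₀, l a x ∈ A₀ := by
    intro a x hx
    rw [hA₀] at hx ⊢
    have : Submodule.span K {v | ∃ a b : A, v = l a b - r a b} ≤
        (Submodule.span K {v | ∃ a b : A, v = l a b - r a b}).comap (l a) := by
      rw [Submodule.span_le]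
      rintro w ⟨b, c, rfl⟩
      simp only [SetLike.mem_coe, Submodule.mem_comap, map_sub]
      rw [hl, h2]
      exact Submodule.subset_span ⟨l a b, c, rfl⟩
    exact this hx
  have hmul_r : ∀ a : A, ∀ x ∈ A₀, r x a ∈ A₀ := by
    intro a x hx
    rw [hA₀] at hx ⊢
    have : Submodule.span K {v | ∃ a b : A, v = l a b - r a b} ≤
        (Submodule.span K {v | ∃ a b : A, v = l a b - r a b}).comap (r.flip a) := by
      rw [Submodule.span_le]
      rintro w ⟨b, c, rfl⟩
      simp only [SetLike.mem_coe, Submodule.mem_comap, map_sub, LinearMap.flip_apply]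
      rw [← h2 b c a, ← hr b c a]
      exact Submodule.subset_span ⟨b, r c a, rfl⟩
    exact this hx
  refine ⟨?_, ?_⟩
  · intro a x hx
    refine ⟨hmul_l a x hx, ?_, ?_, hmul_r a x hx⟩
    · rw [hlker x hx]; simp
    · rw [hrker x hx a]; exact A₀.zero_mem
  · -- build the multiplication
    have hker1 : A₀ ≤ LinearMap.ker (l.compr₂ A₀.mkQ) := by
      intro v hv
      rw [LinearMap.mem_ker]
      ext y
      simp [LinearMap.compr₂_apply, hlker v hv]
    set g1 : (A ⧸ A₀) →ₗ[K] A →ₗ[K] A ⧸ A₀ := Submodule.liftQ A₀ (l.compr₂ A₀.mkQ) hker1 with hg1def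
    have hg1 : ∀ p : A ⧸ A₀, A₀ ≤ LinearMap.ker (g1 p) := by
      intro p
      obtain ⟨a, rfl⟩ := Submodule.Quotient.mk_surjective A₀ p
      intro y hy
      rw [LinearMap.mem_ker]
      have : g1 (Submodule.Quotient.mk a) y = Submodule.Quotient.mk (l a y) := by
        simp [hg1def, Submodule.liftQ_apply, LinearMap.compr₂_apply]
      rw [this, Submodule.Quotient.mk_eq_zero]
      exact hmul_l a y hy
    have hlk : A₀ ≤ LinearMap.ker l := fun v hv => LinearMap.mem_ker.mpr (hlker v hv)
    have hrk : A₀ ≤ LinearMap.ker r.flip := by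
      intro v hv
      rw [LinearMap.mem_ker]
      ext x
      simp [hrker v hv x]
    set lbar : (A ⧸ A₀) →ₗ[K] A →ₗ[K] A := Submodule.liftQ A₀ l hlk with hlbar
    set rbar : (A ⧸ A₀) →ₗ[K] A →ₗ[K] A := Submodule.liftQ A₀ r.flip hrk with hrbar
    refine ⟨fun u v => (Submodule.liftQ A₀ (g1 u.1) (hg1 u.1) v.1, lbar u.1 v.2 + rbar v.1 u.2),
      ?_, ?_⟩
    · intro a b x y
      simp [hg1def, hlbar, hrbar, Submodule.liftQ_apply, LinearMap.compr₂_apply]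
    · rintro ⟨p, x⟩ ⟨q, y⟩ ⟨s, z⟩
      obtain ⟨a, rfl⟩ := Submodule.Quotient.mk_surjective A₀ p
      obtain ⟨b, rfl⟩ := Submodule.Quotient.mk_surjective A₀ q
      obtain ⟨c, rfl⟩ := Submodule.Quotient.mk_surjective A₀ s
      simp only [hg1def, hlbar, hrbar, Submodule.mkQ_apply, Submodule.liftQ_apply,
        LinearMap.compr₂_apply, LinearMap.flip_apply, map_add, LinearMap.add_apply]
      refine Prod.ext ?_ ?_
      · simp [Submodule.mkQ_apply, Submodule.liftQ_apply, LinearMap.compr₂_apply, hl]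
      · simp only [Submodule.mkQ_apply, Submodule.liftQ_apply, LinearMap.compr₂_apply,
          LinearMap.flip_apply, map_add, LinearMap.add_apply]
        rw [hl, ← h2, ← hr, ← h5]
        abel
end
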